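/- Let G be a star-shaped graph (a tree with exactly one branching vertex g₀) whose branches have n₁,…,n_s vertices, and let r = (ind G)². Then ρ_r(n₁) + ⋯ + ρ_r(n_s) = r, where ρ_r(n) = √r·v_n/v_{n+1} with v₀ = 0, v₁ = 1, v_{n+2} = √r·v_{n+1} − v_n. -/

import Mathlib

/-- Vertices of a star-shaped graph with s branches of sizes n k: the branching
vertex `none` together with branch vertices `some ⟨k, i⟩`. -/
abbrev StarV (s : ℕ) (n : Fin s → ℕ) : Type := Option ((k : Fin s) × Fin (n k))

/-- The star-shaped graph: on branch k, vertex i is joined to vertex i+1, and the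
last vertex of each branch (index n k − 1) is joined to the branching vertex. -/
def starGraph (s : ℕ) (n : Fin s → ℕ) : SimpleGraph (StarV s n) :=
  SimpleGraph.fromRel (fun a b =>
    match a, b with
    | some ⟨k, i⟩, some ⟨l, j⟩ => k = l ∧ (i : ℕ) + 1 = (j : ℕ)
    | some ⟨k, i⟩, none => (i : ℕ) + 1 = n k
    | _, _ => False)

section Aux
variable {s : ℕ} {n : Fin s → ℕ}

lemma adj_ss (k l : Fin s) (i : Fin (n k)) (j : Fin (n l)) :
    (starGraph s n).Adj (some ⟨k, i⟩) (some ⟨l, j⟩) ↔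
      k = l ∧ ((i:ℕ)+1 = (j:ℕ) ∨ (j:ℕ)+1 = (i:ℕ)) := by
  simp only [starGraph, SimpleGraph.fromRel_adj]
  constructor
  · rintro ⟨hne, h | h⟩
    · exact ⟨h.1, Or.inl h.2⟩
    · exact ⟨h.1.symm, Or.inr h.2⟩
  · rintro ⟨rfl, h⟩
    refine ⟨?_, ?_⟩
    · intro hc
      have hij : i = j := by simpa using hc
      subst hij; omega
    · rcases h with h | h
      · exact Or.inl ⟨rfl, h⟩
      · exact Or.inr ⟨rfl, h⟩

lemma adj_sn (k : Fin s) (i : Fin (n k)) :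
    (starGraph s n).Adj (some ⟨k, i⟩) none ↔ (i:ℕ)+1 = n k := by
  simp [starGraph, SimpleGraph.fromRel_adj]

lemma adj_ns (k : Fin s) (i : Fin (n k)) :
    (starGraph s n).Adj none (some ⟨k, i⟩) ↔ (i:ℕ)+1 = n k := by
  rw [SimpleGraph.adj_comm]; exact adj_sn k i

lemma sum_fin_ite (N t : ℕ) (g : Fin N → ℝ) :
    ∑ j : Fin N, (if (j:ℕ) = t then g j else 0)
      = if h : t < N then g ⟨t, h⟩ else 0 := by
  by_cases h : t < N
  · rw [dif_pos h]
    have : ∀ j : Fin N, ((j:ℕ) = t) ↔ (j = ⟨t, h⟩) := by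
      intro j; constructor
      · intro hj; exact Fin.ext hj
      · rintro rfl; rfl
    simp only [this]
    rw [Finset.sum_ite_eq' Finset.univ _ g, if_pos (Finset.mem_univ _)]
  · rw [dif_neg h]
    apply Finset.sum_eq_zero
    intro j _
    rw [if_neg]
    omega

end Aux

/-- For a star-shaped graph with branches of n₁,…,n_s vertices and r = (ind G)²,
one has ρ_r(n₁) + ⋯ + ρ_r(n_s) = r, where ρ_r(m) = √r·v_m/v_{m+1} and
v₀ = 0, v₁ = 1, v_{m+2} = √r·v_{m+1} − v_m. -/
theorem stmt_19 (s : ℕ) (hs : 1 ≤ s) (n : Fin s → ℕ) (hn : ∀ k, 1 ≤ n k)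
    [DecidableRel (starGraph s n).Adj]
    (hA : ((starGraph s n).adjMatrix ℝ).IsHermitian)
    (lam : ℝ) (hlam : lam = ⨆ i, hA.eigenvalues i)
    (r : ℝ) (hr : r = lam ^ 2)
    (v : ℕ → ℝ) (hv0 : v 0 = 0) (hv1 : v 1 = 1)
    (hvrec : ∀ m, v (m + 2) = Real.sqrt r * v (m + 1) - v m)
    (hvne : ∀ k, v (n k + 1) ≠ 0) :
    ∑ k : Fin s, Real.sqrt r * v (n k) / v (n k + 1) = r := by
  classical
  -- lam is attained
  obtain ⟨i₀, hi₀⟩ : ∃ i₀, ∀ j, hA.eigenvalues j ≤ hA.eigenvalues i₀ :=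
    Finite.exists_max _
  have hbdd : BddAbove (Set.range hA.eigenvalues) :=
    Set.Finite.bddAbove (Set.finite_range _)
  have hlam_eq : lam = hA.eigenvalues i₀ := by
    rw [hlam]
    exact le_antisymm (ciSup_le hi₀) (le_ciSup hbdd i₀)
  have hfin : ∀ j, hA.eigenvalues j ≤ lam := by
    intro j; rw [hlam_eq]; exact hi₀ j
  -- trace is zero, hence lam ≥ 0
  have htr : ∑ j, hA.eigenvalues j = 0 := by
    have h1 : Matrix.trace ((starGraph s n).adjMatrix ℝ) = 0 :=
      SimpleGraph.trace_adjMatrix _ _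
    have h2 : Matrix.trace ((starGraph s n).adjMatrix ℝ)
        = ∑ j, hA.eigenvalues j := by
      conv_lhs => rw [hA.spectral_theorem]
      rw [Unitary.conjStarAlgAut_apply, Matrix.trace_mul_cycle]
      have hu : (star (hA.eigenvectorUnitary : Matrix (StarV s n) (StarV s n) ℝ)) *
          (hA.eigenvectorUnitary : Matrix (StarV s n) (StarV s n) ℝ) = 1 :=
        (Unitary.mem_iff.mp hA.eigenvectorUnitary.2).1
      rw [hu, Matrix.one_mul, Matrix.trace_diagonal]
      simp
    rw [← h2, h1]
  have hlam0 : 0 ≤ lam := by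
    by_contra hneg
    push_neg at hneg
    have hsum : ∑ j, hA.eigenvalues j < 0 := by
      have : ∀ j ∈ Finset.univ, hA.eigenvalues j < (0:ℝ) :=
        fun j _ => lt_of_le_of_lt (hfin j) hneg
      have hne : (Finset.univ : Finset (StarV s n)).Nonempty := ⟨none, Finset.mem_univ _⟩
      exact Finset.sum_neg this hne
    rw [htr] at hsum; exact lt_irrefl _ hsum
  have hsq : Real.sqrt r = lam := by rw [hr, Real.sqrt_sq hlam0]
  -- the eigenvector
  set x : StarV s n → ℝ := ⇑(hA.eigenvectorBasis i₀) with hxdef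
  have hx : ((starGraph s n).adjMatrix ℝ).mulVec x = lam • x := by
    rw [hxdef, hA.mulVec_eigenvectorBasis, hlam_eq]
  have hxeq : ∀ a, lam * x a = ∑ b, (if (starGraph s n).Adj a b then x b else 0) := by
    intro a
    have := congrFun hx a
    rw [Pi.smul_apply, smul_eq_mul] at this
    rw [← this]
    simp [Matrix.mulVec, dotProduct, SimpleGraph.adjMatrix_apply, ite_mul]
  -- the branch values
  set y : (k : Fin s) → ℕ → ℝ := fun k m =>
    if h : m < n k then x (some ⟨k, ⟨m, h⟩⟩) else if m = n k then x none else 0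
    with hydef
  -- generic expansion of the neighbour sum
  have hsplit : ∀ (a : StarV s n),
      ∑ b, (if (starGraph s n).Adj a b then x b else 0)
      = (if (starGraph s n).Adj a none then x none else 0)
        + ∑ k : Fin s, ∑ i : Fin (n k),
            (if (starGraph s n).Adj a (some ⟨k, i⟩) then x (some ⟨k, i⟩) else 0) := by
    intro a
    rw [Fintype.sum_option]
    congr 1
    rw [← Finset.univ_sigma_univ, Finset.sum_sigma]
  -- equation at the branching vertex
  have eqnone : lam * x none = ∑ k : Fin s, y k (n k - 1) := by
    rw [hxeq none, hsplit]
    rw [if_neg ((starGraph s n).irrefl)]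
    rw [zero_add]
    apply Finset.sum_congr rfl
    intro k _
    have hcond : ∀ i : Fin (n k),
        ((starGraph s n).Adj none (some ⟨k, i⟩)) ↔ ((i:ℕ) = n k - 1) := by
      intro i
      rw [adj_ns]
      have := i.isLt
      omega
    simp only [hcond]
    rw [sum_fin_ite (n k) (n k - 1) (fun i => x (some ⟨k, i⟩))]
    have h1 : n k - 1 < n k := by have := hn k; omega
    rw [dif_pos h1, hydef]
    simp [h1]
  -- equation at branch vertex m (m < n k)
  have eqbranch : ∀ (k : Fin s) (m : ℕ) (hm : m < n k),
      lam * y k m = y k (m + 1) + (if h : 1 ≤ m then y k (m - 1) else 0) := by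
    intro k m hm
    have hym : y k m = x (some ⟨k, ⟨m, hm⟩⟩) := by rw [hydef]; simp [hm]
    rw [hym, hxeq (some ⟨k, ⟨m, hm⟩⟩), hsplit]
    -- the sigma part
    have hsig : ∑ l : Fin s, ∑ j : Fin (n l),
        (if (starGraph s n).Adj (some ⟨k, ⟨m, hm⟩⟩) (some ⟨l, j⟩)
          then x (some ⟨l, j⟩) else 0)
        = (if h : m + 1 < n k then x (some ⟨k, ⟨m+1, h⟩⟩) else 0)
          + (if h : m - 1 < n k ∧ 1 ≤ m then x (some ⟨k, ⟨m-1, h.1⟩⟩) else 0) := by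
      rw [Finset.sum_eq_single_of_mem k (Finset.mem_univ k)]
      · have hsum : ∀ j : Fin (n k),
            (if (starGraph s n).Adj (some ⟨k, ⟨m, hm⟩⟩) (some ⟨k, j⟩)
              then x (some ⟨k, j⟩) else 0)
            = (if (j:ℕ) = m + 1 then x (some ⟨k, j⟩) else 0)
              + (if (j:ℕ) = m - 1 ∧ 1 ≤ m then x (some ⟨k, j⟩) else 0) := by
          intro j
          simp only [adj_ss]
          by_cases h1 : (j:ℕ) = m + 1
          · rw [if_pos ⟨by trivial, Or.inl h1.symm⟩, if_pos h1, if_neg (by omega), add_zero]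
          · by_cases h2 : (j:ℕ) = m - 1 ∧ 1 ≤ m
            · rw [if_pos ⟨by trivial, Or.inr (by omega)⟩, if_neg h1, if_pos h2, zero_add]
            · rw [if_neg (by rintro ⟨-, h | h⟩ <;> omega), if_neg h1, if_neg h2, add_zero]
        rw [Finset.sum_congr rfl (fun j _ => hsum j), Finset.sum_add_distrib]
        congr 1
        · exact sum_fin_ite (n k) (m+1) _
        · by_cases hm1 : 1 ≤ m
          · have h1 : m - 1 < n k := by omega
            rw [dif_pos ⟨h1, hm1⟩]
            have hc : ∀ j : Fin (n k), ((j:ℕ) = m - 1 ∧ 1 ≤ m) ↔ ((j:ℕ) = m - 1) := by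
              intro j; simp [hm1]
            simp only [hc]
            rw [sum_fin_ite (n k) (m-1) (fun j => x (some ⟨k, j⟩)), dif_pos h1]
          · rw [dif_neg (by omega)]
            apply Finset.sum_eq_zero
            intro j _
            rw [if_neg (by omega)]
      · intro l _ hl
        apply Finset.sum_eq_zero
        intro j _
        rw [if_neg]
        rw [adj_ss]
        rintro ⟨h, -⟩
        exact hl h.symm
      
    rw [hsig]
    simp only [adj_sn]
    -- now piece everything into y
    have hy1 : y k (m+1)
        = (if m + 1 = n k then x none else 0)
          + (if h : m + 1 < n k then x (some ⟨k, ⟨m+1, h⟩⟩) else 0) := by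
      rw [hydef]
      by_cases h : m + 1 < n k
      · simp [h, Nat.ne_of_lt h]
      · by_cases h2 : m + 1 = n k
        · simp [h, h2]
        · simp [h, h2]
    have hy2 : (if h : 1 ≤ m then y k (m - 1) else 0)
        = (if h : m - 1 < n k ∧ 1 ≤ m then x (some ⟨k, ⟨m-1, h.1⟩⟩) else 0) := by
      by_cases h : 1 ≤ m
      · have h1 : m - 1 < n k := by omega
        rw [dif_pos h, dif_pos ⟨h1, h⟩, hydef]
        simp [h1]
      · rw [dif_neg h, dif_neg (by omega)]
    rw [hy1, hy2]
    ring
  -- main induction along branches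
  have claim : ∀ (m : ℕ) (k : Fin s), m ≤ n k → y k m = y k 0 * v (m + 1) := by
    intro m
    induction m using Nat.twoStepInduction with
    | zero => intro k _; rw [hv1, mul_one]
    | one =>
      intro k _
      have h0 : (0:ℕ) < n k := hn k
      have heq := eqbranch k 0 h0
      rw [dif_neg (by omega), add_zero] at heq
      have hv2 : v 2 = lam := by
        have h := hvrec 0; rw [hv0, hv1, hsq] at h; simpa using h
      rw [← heq, hv2]; ring
    | more m ih1 ih2 =>
      intro k hk
      have hm1 : m + 1 < n k := by omega
      have heq := eqbranch k (m+1) hm1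
      rw [dif_pos (by omega)] at heq
      simp only [Nat.add_sub_cancel] at heq
      have e1 := ih1 k (by omega)
      have e2 := ih2 k (by omega)
      have hv3 := hvrec (m+1)
      rw [hsq] at hv3
      have hstep : y k (m+2) = lam * y k (m+1) - y k m := by linarith
      rw [hstep, e1, e2, hv3]; ring
  have htop : ∀ k, x none = y k 0 * v (n k + 1) := by
    intro k
    have h1 : y k (n k) = x none := by rw [hydef]; simp
    rw [← h1]; exact claim (n k) k le_rfl
  have hxnone : x none ≠ 0 := by
    intro h0
    have hy0 : ∀ k, y k 0 = 0 := by
      intro k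
      have h := htop k
      rw [h0] at h
      rcases mul_eq_zero.mp h.symm with h | h
      · exact h
      · exact absurd h (hvne k)
    have hx0 : ∀ a, x a = 0 := by
      intro a
      match a with
      | none => exact h0
      | some ⟨k, i⟩ =>
        have hi : (i:ℕ) < n k := i.isLt
        have hc := claim i k (le_of_lt hi)
        have hyi : y k (i:ℕ) = x (some ⟨k, i⟩) := by rw [hydef]; simp [hi]
        rw [hy0 k, zero_mul] at hc
        rw [← hyi, hc]
    have hzero : (hA.eigenvectorBasis i₀ : EuclideanSpace ℝ (StarV s n)) = 0 := by
      ext a; exact hx0 a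
    exact hA.eigenvectorBasis.orthonormal.ne_zero i₀ hzero
  have hyk0 : ∀ k, y k 0 = x none / v (n k + 1) := by
    intro k
    rw [eq_div_iff (hvne k)]
    exact (htop k).symm
  have hsum : ∑ k : Fin s, y k 0 * v (n k) = lam * x none := by
    rw [eqnone]
    apply Finset.sum_congr rfl
    intro k _
    have h1 : n k - 1 ≤ n k := Nat.sub_le _ _
    have h2 : n k - 1 + 1 = n k := by have := hn k; omega
    rw [claim (n k - 1) k h1, h2]
  have key : (∑ k : Fin s, Real.sqrt r * v (n k) / v (n k + 1)) * x none
      = r * x none := by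
    rw [Finset.sum_mul]
    have hterm : ∀ k ∈ (Finset.univ : Finset (Fin s)),
        Real.sqrt r * v (n k) / v (n k + 1) * x none
          = lam * (y k 0 * v (n k)) := by
      intro k _
      rw [hsq, htop k]
      have hre : lam * v (n k) / v (n k + 1) * (y k 0 * v (n k + 1))
          = lam * (y k 0 * v (n k)) * (v (n k + 1) / v (n k + 1)) := by ring
      rw [hre, div_self (hvne k), mul_one]
    rw [Finset.sum_congr rfl hterm, ← Finset.mul_sum, hsum, hr]
    ring
  exact mul_right_cancel₀ hxnone key
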